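/- Uniqueness for the sand-transport Robin problem: let i ∈ {1,2}, ε > 0, T > 0, let 𝒜 : [0,T)×ℝ² → ℝ and 𝒞 : [0,T)×ℝ² → ℝ² be C¹ on an open set containing [0,T)×closure(Ω) with 𝒜(t,x) ≥ 0 there, let z₀ : ℝ² → ℝ and g : [0,T)×ℝ² → ℝ be continuous. If z₁ and z₂ are both classical solutions of ∂z/∂t − (1/εⁱ)∇·(𝒜∇z) = (1/εⁱ)∇·𝒞 in (0,T)×Ω, with z(0,·) = z₀ on Ω and ∂z/∂n + z = g on (0,T)×∂Ω, then z₁ = z₂ on [0,T)×closure(Ω). -/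

import Mathlib

open MeasureTheory Set Real
open scoped RealInnerProductSpace

noncomputable section

abbrev E2 : Type := EuclideanSpace ℝ (Fin 2)

/-- Divergence of a vector field on the plane. -/
def vdiv (F : E2 → E2) (x : E2) : ℝ := ∑ i, fderiv ℝ F x (EuclideanSpace.single i 1) i

/-- A nonempty bounded open set in the plane with `C¹` boundary described by a defining
function `Φ`. -/
structure C1Domain where
  Ω : Set E2
  Φ : E2 → ℝ
  nonempty : Ω.Nonempty
  bounded : Bornology.IsBounded Ω
  isOpen : IsOpen Ω
  smoothΦ : ContDiff ℝ 1 Φ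
  eq_dom : Ω = {x | Φ x < 0}
  eq_bd : frontier Ω = {x | Φ x = 0}
  grad_ne : ∀ x ∈ frontier Ω, gradient Φ x ≠ 0

/-- Outward unit normal. -/
def nml (D : C1Domain) (x : E2) : E2 := ‖gradient D.Φ x‖⁻¹ • gradient D.Φ x

/-- The divergence theorem holds on the domain. -/
def DivergenceThm (D : C1Domain) : Prop :=
  ∀ F : E2 → E2, (∃ U : Set E2, IsOpen U ∧ closure D.Ω ⊆ U ∧ ContDiffOn ℝ 1 F U) →
    (∫ x in D.Ω, vdiv F x) = ∫ x in frontier D.Ω, ⟪F x, nml D x⟫ ∂μH[1]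

/-- `z` is `C¹` in `t` and `C²` in `x` on an open set containing `[0,T) × closure Ω`. -/
def ClassicalReg (T : ℝ) (D : C1Domain) (z : ℝ → E2 → ℝ) : Prop :=
  ∃ U : Set (ℝ × E2), IsOpen U ∧ (Ico 0 T ×ˢ closure D.Ω) ⊆ U ∧
    ContDiffOn ℝ 1 (fun p : ℝ × E2 => z p.1 p.2) U ∧
    ∀ t : ℝ, ContDiffOn ℝ 2 (fun x => z t x) {x | (t, x) ∈ U}

/-! ### Auxiliary lemmas -/

lemma inner_gradient (f : E2 → ℝ) (x v : E2) : ⟪gradient f x, v⟫ = fderiv ℝ f x v := by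
  simp [gradient, InnerProductSpace.toDual_symm_apply]

lemma vdiv_sub {F G : E2 → E2} {x : E2} (hF : DifferentiableAt ℝ F x)
    (hG : DifferentiableAt ℝ G x) :
    vdiv (fun y => F y - G y) x = vdiv F x - vdiv G x := by
  simp only [vdiv, fderiv_fun_sub hF hG]
  rw [← Finset.sum_sub_distrib]
  exact Finset.sum_congr rfl fun i _ => by simp

lemma vdiv_smul {f : E2 → ℝ} {F : E2 → E2} {x : E2} (hf : DifferentiableAt ℝ f x)
    (hF : DifferentiableAt ℝ F x) :
    vdiv (fun y => f y • F y) x = ⟪gradient f x, F x⟫ + f x * vdiv F x := by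
  simp only [vdiv, fderiv_fun_smul hf hF]
  have : ∀ i : Fin 2, ((f x • fderiv ℝ F x + (fderiv ℝ f x).smulRight (F x))
      (EuclideanSpace.single i 1)) i
      = fderiv ℝ f x (EuclideanSpace.single i 1) * F x i
        + f x * fderiv ℝ F x (EuclideanSpace.single i 1) i := by
    intro i; simp [ContinuousLinearMap.smulRight_apply, mul_comm]; ring
  rw [Finset.sum_congr rfl fun i _ => this i, Finset.sum_add_distrib, ← Finset.mul_sum]
  congr 1
  have hgi : ∀ i : Fin 2, gradient f x i = fderiv ℝ f x (EuclideanSpace.single i 1) := by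
    intro i
    have := inner_gradient f x (EuclideanSpace.single i 1)
    rw [← this, EuclideanSpace.inner_single_right]; simp
  simp only [PiLp.inner_apply, conj_trivial, hgi]
  exact Finset.sum_congr rfl fun i _ => by rw [RCLike.inner_apply, conj_trivial, mul_comm]

lemma gradient_sub' {f g : E2 → ℝ} {x : E2} (hf : DifferentiableAt ℝ f x)
    (hg : DifferentiableAt ℝ g x) :
    gradient (fun y => f y - g y) x = gradient f x - gradient g x := by
  simp [gradient, fderiv_fun_sub hf hg]

lemma contDiffOn_gradient {f : E2 → ℝ} {s : Set E2} (hs : IsOpen s)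
    (hf : ContDiffOn ℝ 2 f s) : ContDiffOn ℝ 1 (gradient f) s := by
  have h1 : ContDiffOn ℝ 1 (fderiv ℝ f) s := hf.fderiv_of_isOpen hs (by norm_num)
  have h2 : ContDiff ℝ 1 (fun L : E2 →L[ℝ] ℝ => (InnerProductSpace.toDual ℝ E2).symm L) :=
    (InnerProductSpace.toDual ℝ E2).symm.toContinuousLinearEquiv.toContinuousLinearMap.contDiff
  exact h2.comp_contDiffOn h1

lemma hasDerivAt_slice {z : ℝ → E2 → ℝ} {U : Set (ℝ × E2)} (hUo : IsOpen U)
    (hC : ContDiffOn ℝ 1 (fun p : ℝ × E2 => z p.1 p.2) U) {t : ℝ} {x : E2}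
    (h : (t, x) ∈ U) :
    HasDerivAt (fun s => z s x)
      (fderiv ℝ (fun p : ℝ × E2 => z p.1 p.2) (t, x) ((1 : ℝ), (0 : E2))) t := by
  have hd : DifferentiableAt ℝ (fun p : ℝ × E2 => z p.1 p.2) (t, x) :=
    ((hC.differentiableOn one_ne_zero) _ h).differentiableAt (hUo.mem_nhds h)
  have hg : HasDerivAt (fun s : ℝ => (s, x)) ((1 : ℝ), (0 : E2)) t :=
    (hasDerivAt_id t).prodMk (hasDerivAt_const t x)
  exact hd.hasFDerivAt.comp_hasDerivAt t hg

lemma continuousOn_pderiv {z : ℝ → E2 → ℝ} {U : Set (ℝ × E2)} (hUo : IsOpen U)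
    (hC : ContDiffOn ℝ 1 (fun p : ℝ × E2 => z p.1 p.2) U) :
    ContinuousOn (fun p : ℝ × E2 =>
      fderiv ℝ (fun q : ℝ × E2 => z q.1 q.2) p ((1 : ℝ), (0 : E2))) U := by
  have h1 := hC.continuousOn_fderiv_of_isOpen hUo le_rfl
  exact (ContinuousLinearMap.apply ℝ ℝ ((1 : ℝ), (0 : E2))).continuous.comp_continuousOn h1

lemma continuousOn_vdiv {F : E2 → E2} {s : Set E2} (hs : IsOpen s)
    (hF : ContDiffOn ℝ 1 F s) : ContinuousOn (vdiv F) s := by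
  have h1 := hF.continuousOn_fderiv_of_isOpen hs le_rfl
  refine continuousOn_finset_sum _ fun i _ => ?_
  have h2 := (ContinuousLinearMap.apply ℝ E2
    (EuclideanSpace.single i (1:ℝ))).continuous.comp_continuousOn h1
  exact (by fun_prop : Continuous fun v : E2 => v i).comp_continuousOn h2

lemma vdiv_congr_nhds {F G : E2 → E2} {x : E2} (h : F =ᶠ[nhds x] G) :
    vdiv F x = vdiv G x := by
  simp only [vdiv, h.fderiv_eq]

lemma eq_zero_on_closure {f : E2 → ℝ} {s V : Set E2} (hV : IsOpen V)
    (hf : ContinuousOn f V) (hsub : closure s ⊆ V) (h0 : ∀ x ∈ s, f x = 0) :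
    ∀ x ∈ closure s, f x = 0 := by
  intro x hx
  haveI : (nhdsWithin x s).NeBot := mem_closure_iff_nhdsWithin_neBot.1 hx
  have hc : ContinuousAt f x := hf.continuousAt (hV.mem_nhds (hsub hx))
  have h1 : Filter.Tendsto f (nhdsWithin x s) (nhds (f x)) :=
    hc.continuousWithinAt.tendsto
  have h2 : Filter.Tendsto f (nhdsWithin x s) (nhds 0) := by
    refine Filter.Tendsto.congr' ?_ tendsto_const_nhds
    exact (eventually_nhdsWithin_of_forall h0).mono fun y hy => hy.symm
  exact tendsto_nhds_unique h1 h2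

lemma tube {U : Set (ℝ × E2)} (hUo : IsOpen U) {K : Set E2} (hK : IsCompact K)
    {t : ℝ} (h : {t} ×ˢ K ⊆ U) : ∃ δ > 0, Metric.ball t δ ×ˢ K ⊆ U := by
  obtain ⟨δ, hδ, hsub⟩ :=
    ((isCompact_singleton (x := t)).prod hK).exists_cthickening_subset_open hUo h
  refine ⟨δ, hδ, fun p hp => ?_⟩
  obtain ⟨hp1, hp2⟩ := hp
  refine hsub (Metric.mem_cthickening_of_dist_le p (t, p.2) δ _ ⟨rfl, hp2⟩ ?_)
  have : dist p (t, p.2) = dist p.1 t := by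
    simp [Prod.dist_eq, dist_nonneg]
  rw [this]
  exact le_of_lt (Metric.mem_ball.1 hp1)

theorem stmt0
    (D : C1Domain) (hdiv : DivergenceThm D)
    (i : ℕ) (hi : i = 1 ∨ i = 2)
    (ε T : ℝ) (hε : 0 < ε) (hT : 0 < T)
    (A : ℝ → E2 → ℝ) (C : ℝ → E2 → E2)
    (UA : Set (ℝ × E2)) (hUAopen : IsOpen UA) (hUAsub : Ico 0 T ×ˢ closure D.Ω ⊆ UA)
    (hA : ContDiffOn ℝ 1 (fun p : ℝ × E2 => A p.1 p.2) UA)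
    (hC : ContDiffOn ℝ 1 (fun p : ℝ × E2 => C p.1 p.2) UA)
    (hApos : ∀ p ∈ UA, 0 ≤ A (Prod.fst p) (Prod.snd p))
    (z₀ : E2 → ℝ) (hz₀ : Continuous z₀)
    (g : ℝ → E2 → ℝ) (hg : Continuous fun p : ℝ × E2 => g p.1 p.2)
    (z₁ z₂ : ℝ → E2 → ℝ)
    (hreg1 : ClassicalReg T D z₁) (hreg2 : ClassicalReg T D z₂)
    (hpde1 : ∀ t ∈ Ioo 0 T, ∀ x ∈ D.Ω,
      deriv (fun s => z₁ s x) t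
          - (1 / ε ^ i) * vdiv (fun y => A t y • gradient (z₁ t) y) x
        = (1 / ε ^ i) * vdiv (C t) x)
    (hpde2 : ∀ t ∈ Ioo 0 T, ∀ x ∈ D.Ω,
      deriv (fun s => z₂ s x) t
          - (1 / ε ^ i) * vdiv (fun y => A t y • gradient (z₂ t) y) x
        = (1 / ε ^ i) * vdiv (C t) x)
    (hinit1 : ∀ x ∈ D.Ω, z₁ 0 x = z₀ x)
    (hinit2 : ∀ x ∈ D.Ω, z₂ 0 x = z₀ x)
    (hbc1 : ∀ t ∈ Ioo 0 T, ∀ x ∈ frontier D.Ω,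
      ⟪gradient (z₁ t) x, nml D x⟫ + z₁ t x = g t x)
    (hbc2 : ∀ t ∈ Ioo 0 T, ∀ x ∈ frontier D.Ω,
      ⟪gradient (z₂ t) x, nml D x⟫ + z₂ t x = g t x) :
    ∀ t ∈ Ico 0 T, ∀ x ∈ closure D.Ω, z₁ t x = z₂ t x := by
  obtain ⟨U₁, hU₁o, hU₁s, hz₁C, hz₁x⟩ := hreg1
  obtain ⟨U₂, hU₂o, hU₂s, hz₂C, hz₂x⟩ := hreg2
  set Kc := closure D.Ω with hKc_def
  have hKcomp : IsCompact Kc := D.bounded.isCompact_closure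
  have hΩm : MeasurableSet D.Ω := D.isOpen.measurableSet
  have hμΩ : volume D.Ω < ⊤ :=
    lt_of_le_of_lt (measure_mono subset_closure) hKcomp.measure_lt_top
  set U : Set (ℝ × E2) := U₁ ∩ U₂ ∩ UA with hUdef
  have hUo : IsOpen U := (hU₁o.inter hU₂o).inter hUAopen
  have hUs : Ico 0 T ×ˢ Kc ⊆ U := fun p hp => ⟨⟨hU₁s hp, hU₂s hp⟩, hUAsub hp⟩
  set w : ℝ → E2 → ℝ := fun t x => z₁ t x - z₂ t x with hwdef
  have hwC : ContDiffOn ℝ 1 (fun p : ℝ × E2 => w p.1 p.2) U :=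
    (hz₁C.mono fun p hp => hp.1.1).sub (hz₂C.mono fun p hp => hp.1.2)
  set V : ℝ → Set E2 := fun t => {x : E2 | (t, x) ∈ U} with hVdef
  have hVo : ∀ t, IsOpen (V t) := fun t => hUo.preimage (Continuous.prodMk_right t)
  have hVs : ∀ t ∈ Ico 0 T, Kc ⊆ V t := fun t ht x hx => hUs ⟨ht, hx⟩
  have hw2 : ∀ t, ContDiffOn ℝ 2 (fun x => w t x) (V t) := fun t =>
    ((hz₁x t).mono fun x hx => hx.1.1).sub ((hz₂x t).mono fun x hx => hx.1.2)
  have hAx : ∀ t, ContDiffOn ℝ 1 (fun x => A t x) (V t) := fun t =>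
    hA.comp (contDiff_prodMk_right t).contDiffOn (fun x hx => hx.2)
  -- differentiability helpers
  have hz1d : ∀ t, ∀ x ∈ V t, DifferentiableAt ℝ (z₁ t) x := by
    intro t x hx
    have h := ((hz₁x t).mono fun y (hy : y ∈ V t) => hy.1.1).differentiableOn (by norm_num)
    exact (h x hx).differentiableAt ((hVo t).mem_nhds hx)
  have hz2d : ∀ t, ∀ x ∈ V t, DifferentiableAt ℝ (z₂ t) x := by
    intro t x hx
    have h := ((hz₂x t).mono fun y (hy : y ∈ V t) => hy.1.2).differentiableOn (by norm_num)
    exact (h x hx).differentiableAt ((hVo t).mem_nhds hx)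
  have hgradw : ∀ t, ∀ x ∈ V t,
      gradient (w t) x = gradient (z₁ t) x - gradient (z₂ t) x := fun t x hx =>
    gradient_sub' (hz1d t x hx) (hz2d t x hx)
  -- C¹ vector fields
  have hgrz1 : ∀ t, ContDiffOn ℝ 1 (gradient (z₁ t)) (V t) := fun t =>
    contDiffOn_gradient (hVo t) ((hz₁x t).mono fun y (hy : y ∈ V t) => hy.1.1)
  have hgrz2 : ∀ t, ContDiffOn ℝ 1 (gradient (z₂ t)) (V t) := fun t =>
    contDiffOn_gradient (hVo t) ((hz₂x t).mono fun y (hy : y ∈ V t) => hy.1.2)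
  have hgrw : ∀ t, ContDiffOn ℝ 1 (gradient (w t)) (V t) := fun t =>
    contDiffOn_gradient (hVo t) (hw2 t)
  have hg1C : ∀ t, ContDiffOn ℝ 1 (fun y => A t y • gradient (z₁ t) y) (V t) := fun t =>
    (hAx t).smul (hgrz1 t)
  have hg2C : ∀ t, ContDiffOn ℝ 1 (fun y => A t y • gradient (z₂ t) y) (V t) := fun t =>
    (hAx t).smul (hgrz2 t)
  have hgwC : ∀ t, ContDiffOn ℝ 1 (fun y => A t y • gradient (w t) y) (V t) := fun t =>
    (hAx t).smul (hgrw t)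
  have vdiffAt : ∀ {G : E2 → E2} {t : ℝ} {x : E2}, ContDiffOn ℝ 1 G (V t) → x ∈ V t →
      DifferentiableAt ℝ G x := by
    intro G t x hG hx
    exact ((hG.differentiableOn one_ne_zero) x hx).differentiableAt ((hVo t).mem_nhds hx)
  -- PDE for w
  have hpdew : ∀ t ∈ Ioo 0 T, ∀ x ∈ D.Ω,
      deriv (fun s => w s x) t
        = (1 / ε ^ i) * vdiv (fun y => A t y • gradient (w t) y) x := by
    intro t ht x hx
    have htI : t ∈ Ico 0 T := ⟨ht.1.le, ht.2⟩
    have hxV : x ∈ V t := hVs t htI (subset_closure hx)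
    have hmem1 : (t, x) ∈ U₁ := hxV.1.1
    have hmem2 : (t, x) ∈ U₂ := hxV.1.2
    have hd1 : DifferentiableAt ℝ (fun s => z₁ s x) t :=
      (hasDerivAt_slice hU₁o hz₁C hmem1).differentiableAt
    have hd2 : DifferentiableAt ℝ (fun s => z₂ s x) t :=
      (hasDerivAt_slice hU₂o hz₂C hmem2).differentiableAt
    have hsplit : deriv (fun s => w s x) t
        = deriv (fun s => z₁ s x) t - deriv (fun s => z₂ s x) t := deriv_fun_sub hd1 hd2
    have hv : vdiv (fun y => A t y • gradient (z₁ t) y) x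
          - vdiv (fun y => A t y • gradient (z₂ t) y) x
        = vdiv (fun y => A t y • gradient (w t) y) x := by
      rw [← vdiv_sub (vdiffAt (hg1C t) hxV) (vdiffAt (hg2C t) hxV)]
      refine vdiv_congr_nhds (Filter.eventuallyEq_of_mem ((hVo t).mem_nhds hxV) fun y hy => ?_)
      rw [hgradw t y hy, smul_sub]
    have h1 := hpde1 t ht x hx
    have h2 := hpde2 t ht x hx
    rw [hsplit]
    rw [← hv]
    ring_nf
    ring_nf at h1 h2
    linarith
  -- boundary condition for w
  have hbcw : ∀ t ∈ Ioo 0 T, ∀ x ∈ frontier D.Ω,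
      ⟪gradient (w t) x, nml D x⟫ = - w t x := by
    intro t ht x hx
    have hxV : x ∈ V t := hVs t ⟨ht.1.le, ht.2⟩ (frontier_subset_closure hx)
    rw [hgradw t x hxV, inner_sub_left]
    have h1 := hbc1 t ht x hx
    have h2 := hbc2 t ht x hx
    simp only [hwdef]
    linarith
  -- the time derivative of w
  set pt : ℝ × E2 → ℝ :=
    fun p => fderiv ℝ (fun q : ℝ × E2 => w q.1 q.2) p ((1 : ℝ), (0 : E2)) with hptdef
  have hptC : ContinuousOn pt U := continuousOn_pderiv hUo hwC
  have hwCont : ContinuousOn (fun p : ℝ × E2 => w p.1 p.2) U := hwC.continuousOn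
  -- energy
  set Eng : ℝ → ℝ := fun t => ∫ x in D.Ω, (w t x) ^ 2 with hEngdef
  have hEng : ∀ t₀ ∈ Ico 0 T,
      HasDerivAt Eng (∫ x in D.Ω, 2 * w t₀ x * pt (t₀, x)) t₀ := by
    intro t₀ ht₀
    have hsub : ({t₀} ×ˢ Kc : Set (ℝ × E2)) ⊆ U := by
      rintro ⟨s, y⟩ ⟨hs, hy⟩
      rw [mem_singleton_iff] at hs; subst hs
      exact hUs ⟨ht₀, hy⟩
    obtain ⟨δ, hδ, hball⟩ := tube hUo hKcomp hsub
    set K' : Set (ℝ × E2) := Metric.closedBall t₀ (δ / 2) ×ˢ Kc with hK'def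
    have hK'c : IsCompact K' := (isCompact_closedBall _ _).prod hKcomp
    have hK'U : K' ⊆ U := fun p hp =>
      hball ⟨Metric.mem_ball.2 (lt_of_le_of_lt (Metric.mem_closedBall.1 hp.1) (by linarith)),
        hp.2⟩
    have hcontFd : ContinuousOn (fun p : ℝ × E2 => 2 * w p.1 p.2 * pt p) K' :=
      ((continuous_const.continuousOn.mul (hwCont.mono hK'U)).mul (hptC.mono hK'U))
    obtain ⟨M, hM⟩ := hK'c.exists_bound_of_continuousOn hcontFd
    have key := hasDerivAt_integral_of_dominated_loc_of_deriv_le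
      (μ := volume.restrict D.Ω) (F := fun t x => (w t x) ^ 2)
      (F' := fun t x => 2 * w t x * pt (t, x)) (x₀ := t₀)
      (bound := fun _ => M) (Metric.ball_mem_nhds t₀ (half_pos hδ))
      ?_ ?_ ?_ ?_ ?_ ?_
    · exact key.2
    · -- measurability eventually
      refine Filter.eventually_of_mem (Metric.ball_mem_nhds t₀ hδ) fun t ht => ?_
      have hVc : D.Ω ⊆ V t := fun x hx => hball ⟨ht, subset_closure hx⟩
      exact ((((hw2 t).continuousOn.mono hVc).pow 2).aestronglyMeasurable hΩm)
    · -- integrability at t₀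
      have h := (((hw2 t₀).continuousOn.mono (hVs t₀ ht₀)).pow 2).integrableOn_compact
        (μ := volume) hKcomp
      exact h.mono_set subset_closure
    · -- measurability of F' t₀
      have hVc : Kc ⊆ V t₀ := hVs t₀ ht₀
      have hptS : ContinuousOn (fun x => pt (t₀, x)) (V t₀) :=
        hptC.comp (Continuous.prodMk_right t₀).continuousOn fun x hx => hx
      have : ContinuousOn (fun x => 2 * w t₀ x * pt (t₀, x)) D.Ω := by
        refine ContinuousOn.mul (ContinuousOn.mul continuous_const.continuousOn ?_) ?_
        · exact ((hw2 t₀).continuousOn.mono hVc).mono subset_closure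
        · exact (hptS.mono hVc).mono subset_closure
      exact this.aestronglyMeasurable hΩm
    · -- bound
      refine (ae_restrict_mem hΩm).mono fun x hx t ht => ?_
      refine hM (t, x) ⟨?_, subset_closure hx⟩
      exact Metric.mem_closedBall.2 (le_of_lt (Metric.mem_ball.1 ht))
    · -- bound integrable
      exact integrableOn_const hμΩ.ne
    · -- differentiability
      refine (ae_restrict_mem hΩm).mono fun x hx t ht => ?_
      have hmem : (t, x) ∈ U := hball
        ⟨Metric.mem_ball.2 (lt_of_lt_of_le (Metric.mem_ball.1 ht) (by linarith)),
          subset_closure hx⟩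
      have h := hasDerivAt_slice hUo hwC hmem
      have h2 : HasDerivAt (fun s => w s x * w s x)
          (pt (t, x) * w t x + w t x * pt (t, x)) t := h.mul h
      have h3 : (fun s => (w s x) ^ 2) = fun s => w s x * w s x := by
        funext s; ring
      rw [h3]
      exact h2.congr_deriv (by ring)
  -- the derivative is ≤ 0 on (0, T)
  have hE'le : ∀ t ∈ Ioo 0 T, (∫ x in D.Ω, 2 * w t x * pt (t, x)) ≤ 0 := by
    intro t ht
    have htI : t ∈ Ico 0 T := ⟨ht.1.le, ht.2⟩
    set Ft : E2 → E2 := fun y => w t y • (A t y • gradient (w t) y) with hFtdef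
    have hFtC : ContDiffOn ℝ 1 Ft (V t) :=
      (ContDiffOn.smul ((hw2 t).of_le (by norm_num)) (hgwC t))
    have hwd : ∀ x ∈ V t, DifferentiableAt ℝ (fun y => w t y) x := fun x hx =>
      (((hw2 t).differentiableOn (by norm_num)) x hx).differentiableAt ((hVo t).mem_nhds hx)
    -- pointwise identity on Ω
    have hpt_eq : ∀ x ∈ D.Ω, 2 * w t x * pt (t, x)
        = (2 / ε ^ i) * (vdiv Ft x - A t x * ‖gradient (w t) x‖ ^ 2) := by
      intro x hx
      have hxV : x ∈ V t := hVs t htI (subset_closure hx)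
      have hpt : pt (t, x) = (1 / ε ^ i) * vdiv (fun y => A t y • gradient (w t) y) x := by
        have h1 := (hasDerivAt_slice hUo hwC hxV).deriv
        simp only [hptdef]
        rw [← h1]
        exact hpdew t ht x hx
      have hsm : vdiv Ft x = ⟪gradient (w t) x, A t x • gradient (w t) x⟫
          + w t x * vdiv (fun y => A t y • gradient (w t) y) x :=
        vdiv_smul (hwd x hxV) (vdiffAt (hgwC t) hxV)
      have hin : ⟪gradient (w t) x, A t x • gradient (w t) x⟫
          = A t x * ‖gradient (w t) x‖ ^ 2 := by
        rw [real_inner_smul_right, real_inner_self_eq_norm_sq]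
      rw [hpt]
      rw [hsm, hin]
      have hεi : (ε : ℝ) ^ i ≠ 0 := by positivity
      field_simp
      ring
    -- integrability of the two pieces
    have hint1 : IntegrableOn (fun x => vdiv Ft x) D.Ω volume := by
      have := ((continuousOn_vdiv (hVo t) hFtC).mono (hVs t htI)).integrableOn_compact (μ := volume) hKcomp
      exact this.mono_set subset_closure
    have hint2 : IntegrableOn (fun x => A t x * ‖gradient (w t) x‖ ^ 2) D.Ω volume := by
      have hc : ContinuousOn (fun x => A t x * ‖gradient (w t) x‖ ^ 2) (V t) :=
        (hAx t).continuousOn.mul (((hgrw t).continuousOn.norm).pow 2)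
      exact ((hc.mono (hVs t htI)).integrableOn_compact (μ := volume) hKcomp).mono_set subset_closure
    have hIsub : (∫ x in D.Ω, 2 * w t x * pt (t, x))
        = (2 / ε ^ i) * ((∫ x in D.Ω, vdiv Ft x)
            - ∫ x in D.Ω, A t x * ‖gradient (w t) x‖ ^ 2) := by
      rw [setIntegral_congr_fun hΩm fun x hx => hpt_eq x hx]
      rw [integral_const_mul, integral_sub hint1 hint2]
    -- boundary term
    have hdivthm := hdiv Ft ⟨V t, hVo t, hVs t htI, hFtC⟩
    have hbd : (∫ x in frontier D.Ω, ⟪Ft x, nml D x⟫ ∂μH[1]) ≤ 0 := by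
      refine setIntegral_nonpos isClosed_frontier.measurableSet fun x hx => ?_
      have hxV : x ∈ V t := hVs t htI (frontier_subset_closure hx)
      have hA0 : 0 ≤ A t x := hApos (t, x) hxV.2
      have heq : ⟪Ft x, nml D x⟫ = A t x * (w t x * ⟪gradient (w t) x, nml D x⟫) := by
        rw [hFtdef]
        simp only [real_inner_smul_left]
        ring
      rw [heq, hbcw t ht x hx]
      nlinarith [sq_nonneg (w t x)]
    have h2 : (∫ x in D.Ω, vdiv Ft x) ≤ 0 := by rw [hdivthm]; exact hbd
    have h3 : 0 ≤ ∫ x in D.Ω, A t x * ‖gradient (w t) x‖ ^ 2 :=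
      setIntegral_nonneg hΩm fun x hx =>
        mul_nonneg (hApos (t, x) (hVs t htI (subset_closure hx)).2) (by positivity)
    rw [hIsub]
    have hc : 0 < (2 : ℝ) / ε ^ i := by positivity
    nlinarith
  -- energy vanishes
  have hEng0 : Eng 0 = 0 := by
    have h : ∀ x ∈ D.Ω, (w 0 x) ^ 2 = (0 : ℝ) := fun x hx => by
      simp [hwdef, hinit1 x hx, hinit2 x hx]
    calc Eng 0 = ∫ x in D.Ω, (0 : ℝ) := setIntegral_congr_fun hΩm h
    _ = 0 := integral_zero _ _
  have hEngzero : ∀ t ∈ Ico 0 T, Eng t = 0 := by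
    intro t ht
    rcases eq_or_lt_of_le ht.1 with h0 | h0
    · rw [← h0]; exact hEng0
    · have hanti : AntitoneOn Eng (Icc 0 t) := by
        refine antitoneOn_of_deriv_nonpos (convex_Icc 0 t) ?_ ?_ ?_
        · intro s hs
          exact ((hEng s ⟨hs.1, lt_of_le_of_lt hs.2 ht.2⟩).differentiableAt.continuousAt).continuousWithinAt
        · intro s hs
          rw [interior_Icc] at hs
          exact ((hEng s ⟨hs.1.le, hs.2.trans ht.2⟩).differentiableAt).differentiableWithinAt
        · intro s hs
          rw [interior_Icc] at hs
          have hD := hEng s ⟨hs.1.le, hs.2.trans ht.2⟩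
          rw [hD.deriv]
          exact hE'le s ⟨hs.1, hs.2.trans ht.2⟩
      have h1 : Eng t ≤ Eng 0 := hanti (left_mem_Icc.2 ht.1) (right_mem_Icc.2 ht.1) ht.1
      have h2 : 0 ≤ Eng t := setIntegral_nonneg hΩm fun x _ => sq_nonneg _
      linarith
  -- w vanishes on Ω
  have hwzero : ∀ t ∈ Ico 0 T, ∀ x ∈ D.Ω, w t x = 0 := by
    intro t ht x hx
    have hint : IntegrableOn (fun x => (w t x) ^ 2) D.Ω volume := by
      have := (((hw2 t).continuousOn.mono (hVs t ht)).pow 2).integrableOn_compact (μ := volume) hKcomp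
      exact this.mono_set subset_closure
    have hae : (fun x => (w t x) ^ 2) =ᵐ[volume.restrict D.Ω] 0 :=
      (integral_eq_zero_iff_of_nonneg_ae
        (Filter.Eventually.of_forall fun x => sq_nonneg _) hint).1 (hEngzero t ht)
    by_contra hne
    set S : Set E2 := D.Ω ∩ (V t ∩ ((fun y => w t y) ⁻¹' {(0 : ℝ)}ᶜ)) with hSdef
    have hSopen : IsOpen S :=
      D.isOpen.inter (((hw2 t).continuousOn.isOpen_inter_preimage (hVo t)
        isOpen_compl_singleton))
    have hxS : x ∈ S := ⟨hx, hVs t ht (subset_closure hx), hne⟩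
    have hnull : volume.restrict D.Ω {y | ¬ ((w t y) ^ 2 = 0)} = 0 := by
      have := hae
      rw [Filter.EventuallyEq, Filter.eventually_iff, mem_ae_iff] at this
      simpa [Set.compl_setOf] using this
    have hSnull : volume.restrict D.Ω S = 0 := by
      refine measure_mono_null ?_ hnull
      intro y hy
      simp only [mem_setOf_eq]
      have : w t y ≠ 0 := hy.2.2
      exact pow_ne_zero 2 this
    have hvol : volume S = 0 := by
      rw [Measure.restrict_apply hSopen.measurableSet] at hSnull
      have : S ∩ D.Ω = S := inter_eq_left.2 fun y hy => hy.1
      rwa [this] at hSnull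
    have : S = ∅ := (hSopen.measure_eq_zero_iff volume).1 hvol
    rw [this] at hxS
    exact hxS
  -- conclude on the closure
  intro t ht x hx
  have h0 : w t x = 0 :=
    eq_zero_on_closure (hVo t) ((hw2 t).continuousOn) (hVs t ht) (hwzero t ht) x hx
  have : z₁ t x - z₂ t x = 0 := h0
  linarith

end
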